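/- For a prime p and integer l with 1 ≤ l ≤ p-1, the identity (z+1)_{p-l}/((2z+1)_{p-l}) = ((z^{p-1}-1)/((2z)^{p-1}-1))·((2z-l+1)_{l-1}/((z-l+1)_{l-1})) holds in the field of rational functions 𝔽_p(z), where (a)_n is the rising factorial. -/
import Mathlib

open Polynomial Finset

private lemma asc_prod (S : Type*) [CommSemiring S] (n : ℕ) :
    ascPochhammer S n = ∏ i ∈ range n, (X + (i : S[X])) := by
  induction n with
  | zero => simp
  | succ n ih => rw [ascPochhammer_succ_right, ih, prod_range_succ]

private lemma asc_card (p : ℕ) [Fact p.Prime] :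
    ascPochhammer (ZMod p) p = X ^ p - X := by
  have hp2 : 1 < p := (Fact.out : p.Prime).one_lt
  have hq : Fintype.card (ZMod p) = p := ZMod.card p
  have h1 := FiniteField.roots_X_pow_card_sub_X (ZMod p)
  rw [hq] at h1
  have hm : (X ^ p - X : (ZMod p)[X]).Monic :=
    monic_X_pow_sub (by rw [degree_X]; exact_mod_cast hp2)
  have hd := FiniteField.X_pow_card_sub_X_natDegree_eq (ZMod p) hp2
  have key := prod_multiset_X_sub_C_of_monic_of_roots_card_eq hm
    (by rw [h1, hd]; simp [hq])
  rw [h1] at key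
  have huniv : (Finset.univ.val.map fun a => X - C (a : ZMod p)).prod
      = ∏ a : ZMod p, (X - C a) := rfl
  rw [huniv] at key
  rw [asc_prod, ← key]
  have hneg : ∏ a : ZMod p, (X - C a) = ∏ a : ZMod p, (X + C a) :=
    Fintype.prod_equiv (Equiv.neg (ZMod p)) _ _ (fun a => by simp [sub_eq_add_neg])
  rw [hneg]
  refine (Finset.prod_nbij' (fun i => (i : ZMod p)) (fun a => a.val) ?_ ?_ ?_ ?_ ?_)
  · intro i hi; exact Finset.mem_univ _
  · intro a ha; exact Finset.mem_range.2 (ZMod.val_lt a)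
  · intro i hi; exact ZMod.val_cast_of_lt (Finset.mem_range.1 hi)
  · intro a ha; exact ZMod.natCast_rightInverse a
  · intro i hi
    simp

section
variable (p : ℕ) [Fact p.Prime]

private lemma asc_pm1 (x : RatFunc (ZMod p)) :
    (ascPochhammer (RatFunc (ZMod p)) (p - 1)).eval (x + 1) = x ^ (p - 1) - 1 := by
  have hp2 : 1 < p := (Fact.out : p.Prime).one_lt
  have hmap : ascPochhammer (RatFunc (ZMod p)) p = X ^ p - X := by
    have h := congrArg (Polynomial.map (algebraMap (ZMod p) (RatFunc (ZMod p)))) (asc_card p)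
    simpa using h
  have hp1 : p - 1 + 1 = p := by omega
  have hX : (X : (RatFunc (ZMod p))[X]) ≠ 0 := X_ne_zero
  have h2 : X * (ascPochhammer (RatFunc (ZMod p)) (p - 1)).comp (X + 1)
      = X * (X ^ (p - 1) - 1) := by
    rw [← ascPochhammer_succ_left, hp1, hmap]
    rw [mul_sub, mul_one, ← pow_succ', hp1]
  have h3 := mul_left_cancel₀ hX h2
  have h4 := congrArg (Polynomial.eval x) h3
  simpa [eval_comp] using h4

end

section
variable (p : ℕ) [Fact p.Prime]

private lemma asc_split (l : ℕ) (hl : 1 ≤ l) (hlp : l ≤ p - 1) (x : RatFunc (ZMod p)) :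
    (ascPochhammer (RatFunc (ZMod p)) (p - l)).eval (x + 1) *
      (ascPochhammer (RatFunc (ZMod p)) (l - 1)).eval (x - (l : RatFunc (ZMod p)) + 1)
      = x ^ (p - 1) - 1 := by
  have hp2 : 1 < p := (Fact.out : p.Prime).one_lt
  have hnm : (p - l) + (l - 1) = p - 1 := by omega
  have h := ascPochhammer_mul (S := RatFunc (ZMod p)) (p - l) (l - 1)
  rw [hnm] at h
  have h2 := congrArg (Polynomial.eval (x + 1)) h
  rw [asc_pm1 p x] at h2
  rw [eval_mul, eval_comp] at h2
  simp only [eval_add, eval_X, eval_natCast] at h2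
  have hcast : ((p - l : ℕ) : RatFunc (ZMod p)) = -(l : RatFunc (ZMod p)) := by
    have hp0 : ((p : ℕ) : RatFunc (ZMod p)) = 0 := by
      rw [← map_natCast (algebraMap (ZMod p) (RatFunc (ZMod p)))]
      simp
    rw [Nat.cast_sub (by omega : l ≤ p), hp0, zero_sub]
  rw [hcast] at h2
  have harg : x - (l : RatFunc (ZMod p)) + 1 = x + 1 + -(l : RatFunc (ZMod p)) := by ring
  rw [harg]
  exact h2

end

/-- For a prime `p` and `1 ≤ l ≤ p-1`, in `𝔽_p(z)`:
`(z+1)_{p-l}/(2z+1)_{p-l} = ((z^{p-1}-1)/((2z)^{p-1}-1)) · (2z-l+1)_{l-1}/(z-l+1)_{l-1}`. -/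
theorem stmt_6 (p l : ℕ) [Fact p.Prime] (hl : 1 ≤ l) (hlp : l ≤ p - 1) :
    (ascPochhammer (RatFunc (ZMod p)) (p - l)).eval (RatFunc.X + 1) /
        (ascPochhammer (RatFunc (ZMod p)) (p - l)).eval (2 * RatFunc.X + 1) =
      ((RatFunc.X ^ (p - 1) - 1) / ((2 * RatFunc.X) ^ (p - 1) - 1)) *
        ((ascPochhammer (RatFunc (ZMod p)) (l - 1)).eval
            (2 * RatFunc.X - (l : RatFunc (ZMod p)) + 1) /
          (ascPochhammer (RatFunc (ZMod p)) (l - 1)).eval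
            (RatFunc.X - (l : RatFunc (ZMod p)) + 1)) := by
  have hp2 : 1 < p := (Fact.out : p.Prime).one_lt
  have e1 := asc_split p l hl hlp RatFunc.X
  have e2' := asc_split p l hl hlp (2 * RatFunc.X)
  have h2X : (2 * RatFunc.X : RatFunc (ZMod p))
      = algebraMap (Polynomial (ZMod p)) _ (2 * X) := by
    rw [map_mul, RatFunc.algebraMap_X, map_ofNat]
  have h2arg : (2 * RatFunc.X : RatFunc (ZMod p)) + 1 = 2 * RatFunc.X + 1 := rfl
  have e2 : (ascPochhammer (RatFunc (ZMod p)) (p - l)).eval (2 * RatFunc.X + 1) *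
      (ascPochhammer (RatFunc (ZMod p)) (l - 1)).eval
        (2 * RatFunc.X - (l : RatFunc (ZMod p)) + 1)
      = (2 * RatFunc.X) ^ (p - 1) - 1 := e2'
  have h0 : (RatFunc.X : RatFunc (ZMod p)) ^ (p - 1) - 1 ≠ 0 := by
    rw [← RatFunc.algebraMap_X (K := ZMod p), ← map_pow,
      ← map_one (algebraMap (Polynomial (ZMod p)) (RatFunc (ZMod p))), ← map_sub]
    apply RatFunc.algebraMap_ne_zero
    intro h
    have h' := congrArg (Polynomial.eval 0) h
    simp [zero_pow (by omega : p - 1 ≠ 0)] at h'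
  have h0' : (2 * RatFunc.X : RatFunc (ZMod p)) ^ (p - 1) - 1 ≠ 0 := by
    rw [h2X, ← map_pow,
      ← map_one (algebraMap (Polynomial (ZMod p)) (RatFunc (ZMod p))), ← map_sub]
    apply RatFunc.algebraMap_ne_zero
    intro h
    have h' := congrArg (Polynomial.eval 0) h
    simp [zero_pow (by omega : p - 1 ≠ 0)] at h'
  have hne1 : (ascPochhammer (RatFunc (ZMod p)) (p - l)).eval (RatFunc.X + 1) *
      (ascPochhammer (RatFunc (ZMod p)) (l - 1)).eval
        (RatFunc.X - (l : RatFunc (ZMod p)) + 1) ≠ 0 := by rw [e1]; exact h0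
  have hne2 : (ascPochhammer (RatFunc (ZMod p)) (p - l)).eval (2 * RatFunc.X + 1) *
      (ascPochhammer (RatFunc (ZMod p)) (l - 1)).eval
        (2 * RatFunc.X - (l : RatFunc (ZMod p)) + 1) ≠ 0 := by rw [e2]; exact h0'
  have ha1 := left_ne_zero_of_mul hne1
  have hb1 := right_ne_zero_of_mul hne1
  have ha2 := left_ne_zero_of_mul hne2
  have hb2 := right_ne_zero_of_mul hne2
  rw [div_mul_div_comm, div_eq_div_iff ha2 (mul_ne_zero h0' hb1), ← e1, ← e2]
  ring
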